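/- Energy-consumption dominance of right-shift schedules: let s be a baseline schedule with permutation π, Δ ∈ {0,…,Δmax}^n a scenario, R = R(s,Δ) the realised schedule, and Ŝ = RS(s,q,R_{π(q)}) the right-shift schedule fixing operation π(q) at its realised start. Then for every metering interval M = [m,e] with lenint([m,e],[R_{π(q)}, R_{π(q)}+p_{π(q)}]) > 0, the total energy consumed in M by operations π(1),…,π(q) under R is at most that under Ŝ: Σ_{k=1}^{q} lenint([m,e],[R_{π(k)}, R_{π(k)}+p_{π(k)}])·P_{π(k)} ≤ Σ_{k=1}^{q} lenint([m,e],[Ŝ_{π(k)}, Ŝ_{π(k)}+p_{π(k)}])·P_{π(k)}. -/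

import Mathlib

/-- Length of the intersection of integer intervals [a1,b1] and [a2,b2]. -/
def lenint (a1 b1 a2 b2 : ℤ) : ℤ := max 0 (min b1 b2 - max a1 a2)

/-- Realised schedule: position-indexed recursive definition.
`p` processing times (operation-indexed), `π` permutation of operations,
`s` baseline start times (operation-indexed), `Δ` deviations (operation-indexed). -/
def realised (p : ℕ → ℤ) (π : Equiv.Perm ℕ) (s Δ : ℕ → ℤ) : ℕ → ℤ
  | 0 => s (π 0) + Δ (π 0)
  | k + 1 => max (s (π (k + 1))) (realised p π s Δ k + p (π k)) + Δ (π (k + 1))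

/-- Latest start time schedule (position-indexed). -/
def latest (p : ℕ → ℤ) (π : Equiv.Perm ℕ) (s : ℕ → ℤ) (Δmax : ℤ) : ℕ → ℤ :=
  realised p π s (fun _ => Δmax)

/-- A scenario: all deviations in {0,…,Δmax}. -/
def IsScenario (Δmax : ℤ) (Δ : ℕ → ℤ) : Prop := ∀ j, 0 ≤ Δ j ∧ Δ j ≤ Δmax

/-- Auxiliary function for the right-shift schedule: `j` is the distance from
position `q`, i.e. the value at position `q - j`. -/
def rsAux (p : ℕ → ℤ) (π : Equiv.Perm ℕ) (L : ℕ → ℤ) (q : ℕ) (t : ℤ) : ℕ → ℤ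
  | 0 => t
  | j + 1 => min (L (q - (j + 1))) (rsAux p π L q t j - p (π (q - (j + 1))))

/-- Right-shift schedule (position-indexed, meaningful for positions `k ≤ q`). -/
def rightShift (p : ℕ → ℤ) (π : Equiv.Perm ℕ) (L : ℕ → ℤ) (q : ℕ) (t : ℤ) (k : ℕ) : ℤ :=
  rsAux p π L q t (q - k)


lemma lenint_mono (m e a a' pp : ℤ) (h1 : a ≤ a') (h2 : a' + pp ≤ e) :
    lenint m e a (a + pp) ≤ lenint m e a' (a' + pp) := by
  unfold lenint; omega

lemma realised_le_latest (p : ℕ → ℤ) (π : Equiv.Perm ℕ) (s Δ : ℕ → ℤ) (Δmax : ℤ)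
    (hΔ : IsScenario Δmax Δ) (k : ℕ) :
    realised p π s Δ k ≤ latest p π s Δmax k := by
  induction k with
  | zero => simp only [latest, realised]; exact add_le_add_right (hΔ _).2 _
  | succ n ih =>
      simp only [latest, realised] at *
      exact add_le_add (max_le_max le_rfl (add_le_add_left ih _)) (hΔ _).2

lemma realised_step_le (p : ℕ → ℤ) (π : Equiv.Perm ℕ) (s Δ : ℕ → ℤ) (Δmax : ℤ)
    (hΔ : IsScenario Δmax Δ) (k : ℕ) :
    realised p π s Δ k + p (π k) ≤ realised p π s Δ (k + 1) := by
  have h0 := (hΔ (π (k+1))).1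
  calc realised p π s Δ k + p (π k)
      ≤ max (s (π (k + 1))) (realised p π s Δ k + p (π k)) + Δ (π (k+1)) := by
        have := le_max_right (s (π (k + 1))) (realised p π s Δ k + p (π k)); omega
    _ = realised p π s Δ (k + 1) := rfl

lemma rightShift_self (p : ℕ → ℤ) (π : Equiv.Perm ℕ) (L : ℕ → ℤ) (q : ℕ) (t : ℤ) :
    rightShift p π L q t q = t := by
  simp [rightShift, rsAux]

lemma rightShift_succ (p : ℕ → ℤ) (π : Equiv.Perm ℕ) (L : ℕ → ℤ) (q : ℕ) (t : ℤ)
    (k : ℕ) (hk : k < q) :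
    rightShift p π L q t k
      = min (L k) (rightShift p π L q t (k + 1) - p (π k)) := by
  have h1 : q - k = (q - (k + 1)) + 1 := by omega
  have h2 : q - ((q - (k + 1)) + 1) = k := by omega
  rw [rightShift, h1, rsAux, h2, rightShift]

lemma rightShift_le_t (p : ℕ → ℤ) (π : Equiv.Perm ℕ) (L : ℕ → ℤ) (q : ℕ) (t : ℤ)
    (hp : ∀ j, 0 < p j) :
    ∀ d k, k + d = q → rightShift p π L q t k ≤ t := by
  intro d
  induction d with
  | zero =>
      intro k hk
      obtain rfl : k = q := by omega
      rw [rightShift_self]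
  | succ n ih =>
      intro k hk
      have hk' : k < q := by omega
      rw [rightShift_succ p π L q t k hk']
      have h1 := ih (k + 1) (by omega)
      have h2 := hp (π k)
      have := min_le_right (L k) (rightShift p π L q t (k + 1) - p (π k))
      omega

lemma realised_le_rightShift (p : ℕ → ℤ) (π : Equiv.Perm ℕ) (s Δ : ℕ → ℤ) (Δmax : ℤ)
    (hΔ : IsScenario Δmax Δ) (q : ℕ) :
    ∀ d k, k + d = q →
      realised p π s Δ k
        ≤ rightShift p π (latest p π s Δmax) q (realised p π s Δ q) k := by
  intro d
  induction d with
  | zero =>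
      intro k hk
      obtain rfl : k = q := by omega
      rw [rightShift_self]
  | succ n ih =>
      intro k hk
      have hk' : k < q := by omega
      rw [rightShift_succ _ _ _ _ _ k hk']
      refine le_min (realised_le_latest p π s Δ Δmax hΔ k) ?_
      have h1 := ih (k + 1) (by omega)
      have h2 := realised_step_le p π s Δ Δmax hΔ k
      omega

theorem energy_dominance_rightShift (p : ℕ → ℤ) (P : ℕ → ℝ)
    (π : Equiv.Perm ℕ) (s Δ : ℕ → ℤ) (Δmax : ℤ) (q : ℕ) (m e : ℤ)
    (hp : ∀ j, 0 < p j) (hP : ∀ j, 0 ≤ P j) (hΔmax : 0 ≤ Δmax)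
    (hΔ : IsScenario Δmax Δ) (hme : m < e)
    (hover : ∀ k, s (π k) + p (π k) ≤ s (π (k + 1)))
    (hint : 0 < lenint m e (realised p π s Δ q)
        (realised p π s Δ q + p (π q))) :
    ∑ k ∈ Finset.range (q + 1),
        (lenint m e (realised p π s Δ k) (realised p π s Δ k + p (π k)) : ℝ)
          * P (π k) ≤
    ∑ k ∈ Finset.range (q + 1),
        (lenint m e
            (rightShift p π (latest p π s Δmax) q (realised p π s Δ q) k)
            (rightShift p π (latest p π s Δmax) q (realised p π s Δ q) k
              + p (π k)) : ℝ) * P (π k) := by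
  set t := realised p π s Δ q with ht
  have hte : t < e := by
    have h1 : min e (t + p (π q)) ≤ e := min_le_left _ _
    have h2 : t ≤ max m t := le_max_right _ _
    simp only [lenint] at hint
    omega
  refine Finset.sum_le_sum ?_
  intro k hk
  have hkq : k ≤ q := by
    simp only [Finset.mem_range] at hk; omega
  rcases eq_or_lt_of_le hkq with h | h
  · subst h
    rw [rightShift_self]
  · have hle := realised_le_rightShift p π s Δ Δmax hΔ q (q - k) k (by omega)
    have hSe : rightShift p π (latest p π s Δmax) q t k + p (π k) ≤ e := by
      have h1 := rightShift_succ p π (latest p π s Δmax) q t k h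
      have h2 := rightShift_le_t p π (latest p π s Δmax) q t hp (q - (k+1)) (k+1) (by omega)
      have h3 := min_le_right (latest p π s Δmax k)
        (rightShift p π (latest p π s Δmax) q t (k + 1) - p (π k))
      omega
    have hlen := lenint_mono m e (realised p π s Δ k)
      (rightShift p π (latest p π s Δmax) q t k) (p (π k)) hle hSe
    have : (lenint m e (realised p π s Δ k) (realised p π s Δ k + p (π k)) : ℝ)
        ≤ (lenint m e (rightShift p π (latest p π s Δmax) q t k)
            (rightShift p π (latest p π s Δmax) q t k + p (π k)) : ℝ) := by
      exact_mod_cast hlen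
    exact mul_le_mul_of_nonneg_right this (hP _)
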